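/- Let P be a finite poset and let Δ_k(P) denote the largest cardinality of a subset of P that can be partitioned into k disjoint chains (Δ₀ = 0). Then the sequence λ_j := Δ_j(P) − Δ_{j−1}(P), j ≥ 1, is weakly decreasing and nonnegative; that is, (λ₁, λ₂, …) is a partition of |P|. -/

import Mathlib

set_option linter.unusedSectionVars false

namespace GKaux

variable {V : Type*} [Fintype V] [DecidableEq V]

/-- divergence (outflow minus inflow) of an integer arc-function. -/
def dv (d : V × V → ℤ) (v : V) : ℤ := (∑ u, d (v, u)) - (∑ u, d (u, v))

lemma dv_sub (d e : V × V → ℤ) (v : V) : dv (d - e) v = dv d v - dv e v := by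
  simp [dv, Finset.sum_sub_distrib]; ring

lemma dv_add (d e : V × V → ℤ) (v : V) : dv (d + e) v = dv d v + dv e v := by
  simp [dv, Finset.sum_add_distrib]; ring

/-- unit arc function -/
def sgl (a b : V) : V × V → ℤ := fun e => if e = (a, b) then 1 else 0

lemma dv_sgl (a b z : V) :
    dv (sgl a b) z = (if z = a then 1 else 0) - (if z = b then 1 else 0) := by
  classical
  have h1 : (∑ u, sgl a b (z, u)) = if z = a then (1:ℤ) else 0 := by
    rcases eq_or_ne z a with rfl | h
    · simp [sgl, Prod.ext_iff]
    · simp [sgl, Prod.ext_iff, h]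
  have h2 : (∑ u, sgl a b (u, z)) = if z = b then (1:ℤ) else 0 := by
    rcases eq_or_ne z b with rfl | h
    · simp [sgl, Prod.ext_iff]
    · simp [sgl, Prod.ext_iff, h]
  simp [dv, h1, h2]

def mass (d : V × V → ℤ) : ℕ := ∑ e, (d e).natAbs

lemma mass_lt_sub (d : V × V → ℤ) {a b : V} (h : 1 ≤ d (a, b)) :
    mass (d - sgl a b) < mass d := by
  classical
  apply Finset.sum_lt_sum
  · intro e _
    by_cases he : e = (a, b)
    · subst he
      have hde : (d - sgl a b) (a, b) = d (a, b) - 1 := by simp [sgl]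
      rw [hde]; omega
    · have hde : (d - sgl a b) e = d e := by simp [sgl, he]
      rw [hde]
  · refine ⟨(a, b), Finset.mem_univ _, ?_⟩
    have hde : (d - sgl a b) (a, b) = d (a, b) - 1 := by simp [sgl]
    rw [hde]; omega

lemma mass_lt_add (d : V × V → ℤ) {a b : V} (h : d (a, b) ≤ -1) :
    mass (d + sgl a b) < mass d := by
  classical
  apply Finset.sum_lt_sum
  · intro e _
    by_cases he : e = (a, b)
    · subst he
      have hde : (d + sgl a b) (a, b) = d (a, b) + 1 := by simp [sgl]
      rw [hde]; omega
    · have hde : (d + sgl a b) e = d e := by simp [sgl, he]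
      rw [hde]
  · refine ⟨(a, b), Finset.mem_univ _, ?_⟩
    have hde : (d + sgl a b) (a, b) = d (a, b) + 1 := by simp [sgl]
    rw [hde]; omega

/-- Path extraction: from any integer arc-function with positive divergence at `v`,
we can extract a "signed path" `p` from `v` to some `w` of negative divergence,
with `p` pointwise between `0` and `d`. -/
lemma extract : ∀ (n : ℕ) (d : V × V → ℤ), mass d = n → ∀ v : V, 1 ≤ dv d v →
    ∃ (w : V) (p : V × V → ℤ), w ≠ v ∧ dv d w ≤ -1 ∧
      (∀ e, (0 ≤ p e ∧ p e ≤ d e) ∨ (d e ≤ p e ∧ p e ≤ 0)) ∧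
      dv p v = 1 ∧ dv p w = -1 ∧ (∀ u, u ≠ v → u ≠ w → dv p u = 0) := by
  intro n
  induction n using Nat.strong_induction_on with
  | _ n IH =>
    intro d hn v hv
    have harc : ∃ u, 1 ≤ d (v, u) ∨ d (u, v) ≤ -1 := by
      by_contra hc
      push_neg at hc
      have h1 : (∑ u, d (v, u)) ≤ 0 := Finset.sum_nonpos fun u _ => by
        have := (hc u).1; omega
      have h2 : 0 ≤ (∑ u, d (u, v)) := Finset.sum_nonneg fun u _ => by
        have := (hc u).2; omega
      have : dv d v ≤ 0 := by simp only [dv]; omega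
      omega
    obtain ⟨u, hu⟩ := harc
    rcases eq_or_ne u v with rfl | huv
    · -- loop at v: remove it and recurse
      rcases hu with h | h
      · set d' := d - sgl u u with hd'
        have hdvd' : ∀ z, dv d' z = dv d z := by
          intro z; rw [hd', dv_sub, dv_sgl]; ring
        have hm : mass d' < n := hn ▸ mass_lt_sub d h
        obtain ⟨w, p, hw, hwneg, hbet, hp1, hp2, hp3⟩ :=
          IH (mass d') hm d' rfl u (by rw [hdvd']; exact hv)
        refine ⟨w, p, hw, by rw [← hdvd']; exact hwneg, ?_, hp1, hp2, hp3⟩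
        intro e
        by_cases he : e = (u, u)
        · subst he
          have hde : d' (u, u) = d (u, u) - 1 := by simp [hd', sgl]
          rcases hbet (u, u) with ⟨h1, h2⟩ | ⟨h1, h2⟩ <;> [left; left] <;> omega
        · have hde : d' e = d e := by simp [hd', sgl, he]
          have hb := hbet e
          rw [hde] at hb; exact hb
      · set d' := d + sgl u u with hd'
        have hdvd' : ∀ z, dv d' z = dv d z := by
          intro z; rw [hd', dv_add, dv_sgl]; ring
        have hm : mass d' < n := hn ▸ mass_lt_add d h
        obtain ⟨w, p, hw, hwneg, hbet, hp1, hp2, hp3⟩ :=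
          IH (mass d') hm d' rfl u (by rw [hdvd']; exact hv)
        refine ⟨w, p, hw, by rw [← hdvd']; exact hwneg, ?_, hp1, hp2, hp3⟩
        intro e
        by_cases he : e = (u, u)
        · subst he
          have hde : d' (u, u) = d (u, u) + 1 := by simp [hd', sgl]
          rcases hbet (u, u) with ⟨h1, h2⟩ | ⟨h1, h2⟩ <;> [right; right] <;> omega
        · have hde : d' e = d e := by simp [hd', sgl, he]
          have hb := hbet e
          rw [hde] at hb; exact hb
    · by_cases hneg : dv d u ≤ -1
      · -- one-step path
        rcases hu with h | h
        · refine ⟨u, sgl v u, huv, hneg, ?_, ?_, ?_, ?_⟩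
          · intro e; by_cases he : e = (v, u)
            · subst he
              have hp : sgl v u (v, u) = 1 := by simp [sgl]
              rw [hp]; omega
            · have hp : sgl v u e = 0 := by simp [sgl, he]
              rw [hp]; omega
          · rw [dv_sgl]; simp [huv.symm, (huv : u ≠ v)]
          · rw [dv_sgl]; simp [huv]
          · intro z hz1 hz2; rw [dv_sgl]; simp [hz1, hz2]
        · refine ⟨u, -sgl u v, huv, hneg, ?_, ?_, ?_, ?_⟩
          · intro e; by_cases he : e = (u, v)
            · subst he
              have hp : (-sgl u v) (u, v) = -1 := by simp [sgl]
              rw [hp]; omega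
            · have hp : (-sgl u v) e = 0 := by simp [sgl, he]
              rw [hp]; omega
          · have := dv_sgl u v v
            have hdvneg : dv (-sgl u v) v = - dv (sgl u v) v := by
              simp [dv, Finset.sum_neg_distrib]; ring
            rw [hdvneg, this]; simp [huv, (Ne.symm huv : v ≠ u)]
          · have := dv_sgl u v u
            have hdvneg : dv (-sgl u v) u = - dv (sgl u v) u := by
              simp [dv, Finset.sum_neg_distrib]; ring
            rw [hdvneg, this]; simp [huv]
          · intro z hz1 hz2
            have := dv_sgl u v z
            have hdvneg : dv (-sgl u v) z = - dv (sgl u v) z := by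
              simp [dv, Finset.sum_neg_distrib]; ring
            rw [hdvneg, this]; simp [hz1, hz2]
      · push_neg at hneg
        rcases hu with h | h
        · -- forward step, recurse from u
          set d' := d - sgl v u with hd'
          have hdv' : ∀ z, dv d' z = dv d z - ((if z = v then 1 else 0) - (if z = u then 1 else 0)) := by
            intro z; rw [hd', dv_sub, dv_sgl]
          have hm : mass d' < n := hn ▸ mass_lt_sub d h
          have hdu' : 1 ≤ dv d' u := by rw [hdv' u]; simp [huv]; omega
          obtain ⟨w, p', hw, hwneg, hbet, hp1, hp2, hp3⟩ := IH (mass d') hm d' rfl u hdu'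
          have hwv : w ≠ v := by
            intro hwv; subst hwv
            rw [hdv' w] at hwneg; simp [huv.symm] at hwneg; omega
          refine ⟨w, p' + sgl v u, hwv, ?_, ?_, ?_, ?_, ?_⟩
          · rw [hdv' w] at hwneg; simp [hwv, hw] at hwneg; omega
          · intro e
            by_cases he : e = (v, u)
            · subst he
              rcases hbet (v, u) with ⟨h1, h2⟩ | ⟨h1, h2⟩
              · left
                constructor
                · simp only [Pi.add_apply, sgl, if_pos rfl]; omega
                · have := h2
                  simp only [hd', Pi.sub_apply, sgl, if_pos rfl] at this
                  simp only [Pi.add_apply, sgl, if_pos rfl]; omega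
              · left
                have h3 : d' (v, u) = d (v, u) - 1 := by
                  simp [hd', sgl]
                constructor
                · simp only [Pi.add_apply, sgl, if_pos rfl]; omega
                · simp only [Pi.add_apply, sgl, if_pos rfl]; omega
            · have : (p' + sgl v u) e = p' e := by simp [sgl, he]
              rw [this]
              have : d' e = d e := by simp [hd', sgl, he]
              rcases hbet e with hb | hb
              · left; rw [← this]; exact hb
              · right; rw [← this]; exact hb
          · rw [dv_add, dv_sgl, hp3 v (Ne.symm huv) (Ne.symm hwv)]
            simp [huv.symm]
          · rw [dv_add, dv_sgl, hp2]; simp [hwv, hw]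
          · intro z hz1 hz2
            rcases eq_or_ne z u with rfl | hzu
            · rw [dv_add, dv_sgl, hp1]; simp [huv]
            · rw [dv_add, dv_sgl, hp3 z hzu hz2]; simp [hz1, hzu]
        · -- backward step, recurse from u
          set d' := d + sgl u v with hd'
          have hdv' : ∀ z, dv d' z = dv d z + ((if z = u then 1 else 0) - (if z = v then 1 else 0)) := by
            intro z; rw [hd', dv_add, dv_sgl]
          have hm : mass d' < n := hn ▸ mass_lt_add d h
          have hdu' : 1 ≤ dv d' u := by rw [hdv' u]; simp [huv]; omega
          obtain ⟨w, p', hw, hwneg, hbet, hp1, hp2, hp3⟩ := IH (mass d') hm d' rfl u hdu'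
          have hwv : w ≠ v := by
            intro hwv; subst hwv
            rw [hdv' w] at hwneg; simp [huv.symm] at hwneg; omega
          refine ⟨w, p' - sgl u v, hwv, ?_, ?_, ?_, ?_, ?_⟩
          · rw [hdv' w] at hwneg; simp [hwv, hw] at hwneg; omega
          · intro e
            by_cases he : e = (u, v)
            · subst he
              have h3 : d' (u, v) = d (u, v) + 1 := by simp [hd', sgl]
              rcases hbet (u, v) with ⟨h1, h2⟩ | ⟨h1, h2⟩
              · right
                constructor
                · simp only [Pi.sub_apply, sgl, if_pos rfl]; omega
                · simp only [Pi.sub_apply, sgl, if_pos rfl]; omega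
              · right
                constructor
                · simp only [Pi.sub_apply, sgl, if_pos rfl]; omega
                · simp only [Pi.sub_apply, sgl, if_pos rfl]; omega
            · have : (p' - sgl u v) e = p' e := by simp [sgl, he]
              rw [this]
              have : d' e = d e := by simp [hd', sgl, he]
              rcases hbet e with hb | hb
              · left; rw [← this]; exact hb
              · right; rw [← this]; exact hb
          · rw [dv_sub, dv_sgl, hp3 v (Ne.symm huv) (Ne.symm hwv)]
            simp [huv.symm]
          · rw [dv_sub, dv_sgl, hp2]; simp [hwv, hw]
          · intro z hz1 hz2
            rcases eq_or_ne z u with rfl | hzu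
            · rw [dv_sub, dv_sgl, hp1]; simp [huv]
            · rw [dv_sub, dv_sgl, hp3 z hzu hz2]; simp [hz1, hzu]

end GKaux

namespace GKaux

attribute [local instance] Classical.propDecidable

variable {P : Type*} [PartialOrder P] [Fintype P] [DecidableEq P]

abbrev GKN (P : Type*) := Option (Option (P × Bool))

def nS : GKN P := none
def nT : GKN P := some none
def nA (x : P) : GKN P := some (some (x, false))
def nB (x : P) : GKN P := some (some (x, true))

@[simp] lemma nA_inj {x y : P} : nA x = nA y ↔ x = y := by simp [nA]
@[simp] lemma nB_inj {x y : P} : nB x = nB y ↔ x = y := by simp [nB]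
@[simp] lemma nA_ne_nB {x y : P} : nA x ≠ nB y := by simp [nA, nB]
@[simp] lemma nB_ne_nA {x y : P} : nB x ≠ nA y := by simp [nA, nB]
@[simp] lemma nS_ne_nT : (nS : GKN P) ≠ nT := by simp [nS, nT]
@[simp] lemma nT_ne_nS : (nT : GKN P) ≠ nS := by simp [nS, nT]
@[simp] lemma nS_ne_nA {x : P} : (nS : GKN P) ≠ nA x := by simp [nS, nA]
@[simp] lemma nA_ne_nS {x : P} : nA x ≠ (nS : GKN P) := by simp [nS, nA]
@[simp] lemma nS_ne_nB {x : P} : (nS : GKN P) ≠ nB x := by simp [nS, nB]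
@[simp] lemma nB_ne_nS {x : P} : nB x ≠ (nS : GKN P) := by simp [nS, nB]
@[simp] lemma nT_ne_nA {x : P} : (nT : GKN P) ≠ nA x := by simp [nT, nA]
@[simp] lemma nA_ne_nT {x : P} : nA x ≠ (nT : GKN P) := by simp [nT, nA]
@[simp] lemma nT_ne_nB {x : P} : (nT : GKN P) ≠ nB x := by simp [nT, nB]
@[simp] lemma nB_ne_nT {x : P} : nB x ≠ (nT : GKN P) := by simp [nT, nB]

/-- allowed arcs -/
def Allowed : GKN P × GKN P → Prop := fun e =>
  (∃ x, e = (nS, nA x)) ∨ (∃ x, e = (nA x, nB x)) ∨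
  (∃ x y, x < y ∧ e = (nB x, nA y)) ∨ (∃ x, e = (nB x, nT))

structure IsFlow (g : GKN P × GKN P → ℤ) : Prop where
  nonneg : ∀ e, 0 ≤ g e
  le_one : ∀ e, g e ≤ 1
  supp : ∀ e, g e ≠ 0 → Allowed e
  cons : ∀ u, u ≠ nS → u ≠ nT → dv g u = 0

lemma sum_GKN (F : GKN P → ℤ) :
    ∑ u, F u = F nS + F nT + (∑ x, F (nA x)) + (∑ x, F (nB x)) := by
  rw [Fintype.sum_option]
  rw [Fintype.sum_option]
  rw [Fintype.sum_prod_type]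
  have : ∀ x : P, (∑ b : Bool, F (some (some (x, b)))) =
      F (nA x) + F (nB x) := by
    intro x; rw [Fintype.sum_bool]; simp [nA, nB]; ring
  simp only [this, nS, nT, Finset.sum_add_distrib]
  ring

section FlowLemmas

variable {g : GKN P × GKN P → ℤ} (hg : IsFlow g)

include hg

lemma flow_vanish {e : GKN P × GKN P} (h : ¬ Allowed e) : g e = 0 := by
  by_contra hne; exact h (hg.supp e hne)

lemma g_to_nS (u : GKN P) : g (u, nS) = 0 := by
  apply flow_vanish hg
  rintro (⟨x, hx⟩ | ⟨x, hx⟩ | ⟨x, y, hxy, hx⟩ | ⟨x, hx⟩) <;>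
    simp_all [Prod.ext_iff]

lemma g_from_nT (u : GKN P) : g (nT, u) = 0 := by
  apply flow_vanish hg
  rintro (⟨x, hx⟩ | ⟨x, hx⟩ | ⟨x, y, hxy, hx⟩ | ⟨x, hx⟩) <;>
    simp_all [Prod.ext_iff]

lemma g_nA_nA (x y : P) : g (nA x, nA y) = 0 := by
  apply flow_vanish hg
  rintro (⟨z, hz⟩ | ⟨z, hz⟩ | ⟨z, w, hzw, hz⟩ | ⟨z, hz⟩) <;>
    simp_all [Prod.ext_iff]

lemma g_nB_nB (x y : P) : g (nB x, nB y) = 0 := by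
  apply flow_vanish hg
  rintro (⟨z, hz⟩ | ⟨z, hz⟩ | ⟨z, w, hzw, hz⟩ | ⟨z, hz⟩) <;>
    simp_all [Prod.ext_iff]

lemma g_nA_nT (x : P) : g (nA x, nT) = 0 := by
  apply flow_vanish hg
  rintro (⟨z, hz⟩ | ⟨z, hz⟩ | ⟨z, w, hzw, hz⟩ | ⟨z, hz⟩) <;>
    simp_all [Prod.ext_iff]

lemma g_nS_nB (x : P) : g (nS, nB x) = 0 := by
  apply flow_vanish hg
  rintro (⟨z, hz⟩ | ⟨z, hz⟩ | ⟨z, w, hzw, hz⟩ | ⟨z, hz⟩) <;>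
    simp_all [Prod.ext_iff]

lemma g_nS_nT : g (nS, nT) = 0 := by
  apply flow_vanish hg
  rintro (⟨z, hz⟩ | ⟨z, hz⟩ | ⟨z, w, hzw, hz⟩ | ⟨z, hz⟩) <;>
    simp_all [Prod.ext_iff]

lemma g_nS_nS : g (nS, nS) = 0 := g_to_nS hg nS

lemma g_nA_nB_ne {x y : P} (h : x ≠ y) : g (nA x, nB y) = 0 := by
  apply flow_vanish hg
  rintro (⟨z, hz⟩ | ⟨z, hz⟩ | ⟨z, w, hzw, hz⟩ | ⟨z, hz⟩) <;>
    simp_all [Prod.ext_iff]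

lemma g_nB_nA_nlt {x y : P} (h : ¬ x < y) : g (nB x, nA y) = 0 := by
  apply flow_vanish hg
  rintro (⟨z, hz⟩ | ⟨z, hz⟩ | ⟨z, w, hzw, hz⟩ | ⟨z, hz⟩) <;>
    simp_all [Prod.ext_iff]

/-- conservation at `nA x` in explicit form -/
lemma consA (x : P) :
    g (nA x, nB x) = g (nS, nA x) + ∑ y, g (nB y, nA x) := by
  have h := hg.cons (nA x) (by simp) (by simp)
  have hout : (∑ u, g (nA x, u)) = g (nA x, nB x) := by
    rw [sum_GKN (fun u => g (nA x, u))]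
    rw [g_to_nS hg, g_nA_nT hg]
    have h1 : (∑ y, g (nA x, nA y)) = 0 :=
      Finset.sum_eq_zero fun y _ => g_nA_nA hg x y
    have h2 : (∑ y, g (nA x, nB y)) = g (nA x, nB x) := by
      apply Finset.sum_eq_single_of_mem x (Finset.mem_univ x)
      intro y _ hy; exact g_nA_nB_ne hg (Ne.symm hy)
    rw [h1, h2]; ring
  have hin : (∑ u, g (u, nA x)) = g (nS, nA x) + ∑ y, g (nB y, nA x) := by
    rw [sum_GKN (fun u => g (u, nA x))]
    rw [g_from_nT hg]
    have h1 : (∑ y, g (nA y, nA x)) = 0 :=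
      Finset.sum_eq_zero fun y _ => g_nA_nA hg y x
    rw [h1]; ring
  rw [dv, hout, hin] at h
  omega

/-- conservation at `nB x` in explicit form -/
lemma consB (x : P) :
    g (nA x, nB x) = g (nB x, nT) + ∑ y, g (nB x, nA y) := by
  have h := hg.cons (nB x) (by simp) (by simp)
  have hout : (∑ u, g (nB x, u)) = g (nB x, nT) + ∑ y, g (nB x, nA y) := by
    rw [sum_GKN (fun u => g (nB x, u))]
    rw [g_to_nS hg]
    have h1 : (∑ y, g (nB x, nB y)) = 0 :=
      Finset.sum_eq_zero fun y _ => g_nB_nB hg x y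
    rw [h1]; ring
  have hin : (∑ u, g (u, nB x)) = g (nA x, nB x) := by
    rw [sum_GKN (fun u => g (u, nB x))]
    rw [g_nS_nB hg]
    have h1 : (∑ y, g (nB y, nB x)) = 0 :=
      Finset.sum_eq_zero fun y _ => g_nB_nB hg y x
    have h2 : (∑ y, g (nA y, nB x)) = g (nA x, nB x) := by
      apply Finset.sum_eq_single_of_mem x (Finset.mem_univ x)
      intro y _ hy; exact g_nA_nB_ne hg hy
    have h3 : g (nT, nB x) = 0 := g_from_nT hg _
    rw [h1, h2, h3]; ring
  rw [dv, hout, hin] at h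
  omega

lemma value_eq : dv g nS = ∑ x, g (nS, nA x) := by
  have hout : (∑ u, g (nS, u)) = ∑ x, g (nS, nA x) := by
    rw [sum_GKN (fun u => g (nS, u))]
    rw [g_nS_nS hg, g_nS_nT hg]
    have h1 : (∑ y, g (nS, nB y)) = 0 :=
      Finset.sum_eq_zero fun y _ => g_nS_nB hg y
    rw [h1]; ring
  have hin : (∑ u, g (u, nS)) = 0 :=
    Finset.sum_eq_zero fun u _ => g_to_nS hg u
  rw [dv, hout, hin]; ring

lemma value_nonneg : 0 ≤ dv g nS := by
  rw [value_eq hg]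
  exact Finset.sum_nonneg fun x _ => hg.nonneg _

lemma g01 (e : GKN P × GKN P) : g e = 0 ∨ g e = 1 := by
  have := hg.nonneg e; have := hg.le_one e; omega

end FlowLemmas

end GKaux

namespace GKaux

attribute [local instance] Classical.propDecidable

variable {P : Type*} [PartialOrder P] [Fintype P] [DecidableEq P]

def covered (g : GKN P × GKN P → ℤ) : Finset P :=
  Finset.univ.filter (fun x => g (nA x, nB x) = 1)

def ends (g : GKN P × GKN P → ℤ) : Finset P :=
  Finset.univ.filter (fun x => g (nB x, nT) = 1)

section FlowLemmas2

variable {g : GKN P × GKN P → ℤ} (hg : IsFlow g)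

include hg

lemma single_le_sum_in (x y : P) : g (nB y, nA x) ≤ ∑ z, g (nB z, nA x) :=
  Finset.single_le_sum (fun z _ => hg.nonneg (nB z, nA x)) (Finset.mem_univ y)

lemma single_le_sum_out (x y : P) : g (nB x, nA y) ≤ ∑ z, g (nB x, nA z) :=
  Finset.single_le_sum (fun z _ => hg.nonneg (nB x, nA z)) (Finset.mem_univ y)

/-- L1 -/
lemma arc_ba {y x : P} (h : g (nB y, nA x) = 1) :
    g (nA x, nB x) = 1 ∧ g (nA y, nB y) = 1 ∧ y < x := by
  have hlt : y < x := by
    by_contra hc; rw [g_nB_nA_nlt hg hc] at h; omega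
  have h1 : g (nA x, nB x) = 1 := by
    have := consA hg x
    have h2 := single_le_sum_in hg x y
    have := hg.nonneg (nS, nA x)
    have := hg.le_one (nA x, nB x)
    omega
  have h2 : g (nA y, nB y) = 1 := by
    have := consB hg y
    have h3 := single_le_sum_out hg y x
    have := hg.nonneg (nB y, nT)
    have := hg.le_one (nA y, nB y)
    omega
  exact ⟨h1, h2, hlt⟩

/-- L2 -/
lemma arc_sa {x : P} (h : g (nS, nA x) = 1) : g (nA x, nB x) = 1 := by
  have := consA hg x
  have : (0:ℤ) ≤ ∑ z, g (nB z, nA x) :=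
    Finset.sum_nonneg fun z _ => hg.nonneg _
  have := hg.le_one (nA x, nB x)
  omega

/-- L5 -/
lemma arc_bt {x : P} (h : g (nB x, nT) = 1) : g (nA x, nB x) = 1 := by
  have := consB hg x
  have : (0:ℤ) ≤ ∑ z, g (nB x, nA z) :=
    Finset.sum_nonneg fun z _ => hg.nonneg _
  have := hg.le_one (nA x, nB x)
  omega

/-- sum of 0/1 entries equal to 1 gives a witness -/
lemma exists_one {F : P → ℤ} (h01 : ∀ y, F y = 0 ∨ F y = 1)
    (h : (∑ y, F y) = 1) : ∃ y, F y = 1 := by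
  by_contra hc
  push_neg at hc
  have : (∑ y, F y) = 0 := Finset.sum_eq_zero fun y _ => by
    rcases h01 y with h0 | h1
    · exact h0
    · exact absurd h1 (hc y)
  omega

/-- L3: inflow dichotomy -/
lemma inflow_dichotomy {x : P} (h : g (nA x, nB x) = 1) :
    g (nS, nA x) = 1 ∨ ∃ y, g (nB y, nA x) = 1 := by
  have hc := consA hg x
  rcases g01 hg (nS, nA x) with h0 | h1
  · right
    apply exists_one hg (fun y => g01 hg (nB y, nA x))
    omega
  · left; exact h1

/-- L3': outflow dichotomy -/
lemma outflow_dichotomy {x : P} (h : g (nA x, nB x) = 1) :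
    g (nB x, nT) = 1 ∨ ∃ y, g (nB x, nA y) = 1 := by
  have hc := consB hg x
  rcases g01 hg (nB x, nT) with h0 | h1
  · right
    apply exists_one hg (fun y => g01 hg (nB x, nA y))
    omega
  · left; exact h1

lemma pair_le_sum {F : P → ℤ} (hF : ∀ y, 0 ≤ F y) {y y' : P} (h : y ≠ y') :
    F y + F y' ≤ ∑ z, F z := by
  have : ({y, y'} : Finset P) ⊆ Finset.univ := Finset.subset_univ _
  calc F y + F y' = ∑ z ∈ ({y, y'} : Finset P), F z := (Finset.sum_pair h).symm
    _ ≤ ∑ z, F z := Finset.sum_le_sum_of_subset_of_nonneg this fun z _ _ => hF z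

/-- L6: if `y` has a successor it does not go to `t` -/
lemma succ_not_end {y x : P} (h : g (nB y, nA x) = 1) : g (nB y, nT) = 0 := by
  have hc := consB hg y
  have := single_le_sum_out hg y x
  have := hg.le_one (nA y, nB y)
  have := hg.nonneg (nB y, nT)
  omega

/-- if `x` has inflow from `s` then from no `b y` -/
lemma s_no_pred {x y : P} (hs : g (nS, nA x) = 1) : g (nB y, nA x) = 0 := by
  have hc := consA hg x
  have := single_le_sum_in hg x y
  have := hg.le_one (nA x, nB x)
  have := hg.nonneg (nB y, nA x)
  have hnn : (0:ℤ) ≤ ∑ z, g (nB z, nA x) :=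
    Finset.sum_nonneg fun z _ => hg.nonneg _
  omega

/-- predecessor uniqueness -/
lemma pred_unique {x y y' : P} (h : g (nB y, nA x) = 1)
    (h' : g (nB y', nA x) = 1) : y = y' := by
  by_contra hne
  have := pair_le_sum hg (fun z => hg.nonneg (nB z, nA x)) hne
  have hc := consA hg x
  have := hg.le_one (nA x, nB x)
  have := hg.nonneg (nS, nA x)
  omega

lemma mem_covered {x : P} : x ∈ covered g ↔ g (nA x, nB x) = 1 := by
  simp [covered]

lemma mem_ends {x : P} : x ∈ ends g ↔ g (nB x, nT) = 1 := by
  simp [ends]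

lemma card_covered : ((covered g).card : ℤ) = ∑ x, g (nA x, nB x) := by
  classical
  rw [covered, ← Finset.sum_boole]
  apply Finset.sum_congr rfl
  intro x _
  rcases g01 hg (nA x, nB x) with h | h <;> simp [h]

end FlowLemmas2

end GKaux

namespace GKaux

attribute [local instance] Classical.propDecidable

variable {P : Type*} [PartialOrder P] [Fintype P] [DecidableEq P]

lemma flow_to_chains : ∀ (n : ℕ) (g : GKN P × GKN P → ℤ), IsFlow g → (covered g).card = n →
    ∀ k : ℕ, dv g nS ≤ (k : ℤ) →
    ∃ C : Fin k → Finset P,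
      (∀ i, IsChain (· ≤ ·) (C i : Set P)) ∧
      (Pairwise fun i j => Disjoint (C i) (C j)) ∧
      Finset.univ.biUnion C = covered g ∧
      (∀ e ∈ ends g, ∃ i, e ∈ C i ∧ ∀ z ∈ C i, z ≤ e) := by
  intro n
  induction n using Nat.strong_induction_on with
  | _ n IH =>
    intro g hg hcard k hk
    rcases Finset.eq_empty_or_nonempty (covered g) with hemp | hne
    · refine ⟨fun _ => ∅, ?_, ?_, ?_, ?_⟩
      · intro i; simp [IsChain]
      · intro i j _; simp
      · rw [hemp]
        apply Finset.eq_empty_of_forall_notMem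
        intro x hx
        simp at hx
      · intro e he
        exfalso
        have h1 : g (nA e, nB e) = 1 := arc_bt hg ((mem_ends hg).1 he)
        have : e ∈ covered g := (mem_covered hg).2 h1
        rw [hemp] at this; simp at this
    · obtain ⟨m, hm, hmax⟩ := (by obtain ⟨m, hm⟩ := Finset.exists_maximal hne; exact ⟨m, hm.1, fun x hx hlt => lt_irrefl _ (lt_of_lt_of_le hlt (hm.2 hx hlt.le))⟩ : ∃ m ∈ covered g, ∀ x ∈ covered g, ¬ m < x)
      have hmcov : g (nA m, nB m) = 1 := (mem_covered hg).1 hm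
      have hbt : g (nB m, nT) = 1 := by
        rcases outflow_dichotomy hg hmcov with h | ⟨y, hy⟩
        · exact h
        · exfalso
          obtain ⟨h1, _, hlt⟩ := arc_ba hg hy
          exact hmax y ((mem_covered hg).2 h1) hlt
      rcases inflow_dichotomy hg hmcov with hs | ⟨y, hy⟩
      · -- m is a singleton path from s
        have hval1 : 1 ≤ dv g nS := by
          rw [value_eq hg]
          have h2 : g (nS, nA m) ≤ ∑ x, g (nS, nA x) :=
            Finset.single_le_sum (fun x _ => hg.nonneg (nS, nA x)) (Finset.mem_univ m)
          omega
        cases k with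
        | zero => exfalso; simp at hk; omega
        | succ k' =>
          set g' : GKN P × GKN P → ℤ :=
            g - (sgl nS (nA m) + sgl (nA m) (nB m) + sgl (nB m) nT) with hg'def
          have hg'e : ∀ e, g' e = g e - (if e = (nS, nA m) then 1 else 0)
              - (if e = (nA m, nB m) then 1 else 0)
              - (if e = (nB m, nT) then 1 else 0) := by
            intro e; simp [hg'def, sgl]; ring
          have hg'1 : g' (nS, nA m) = 0 := by
            rw [hg'e, hs]; simp [Prod.ext_iff]
          have hg'2 : g' (nA m, nB m) = 0 := by
            rw [hg'e, hmcov]; simp [Prod.ext_iff]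
          have hg'3 : g' (nB m, nT) = 0 := by
            rw [hg'e, hbt]; simp [Prod.ext_iff]
          have hg'other : ∀ e, e ≠ (nS, nA m) → e ≠ (nA m, nB m) → e ≠ (nB m, nT) →
              g' e = g e := by
            intro e h1 h2 h3; rw [hg'e]; simp [h1, h2, h3]
          have hdvg' : ∀ u, dv g' u = dv g u -
              ((if u = nS then (1:ℤ) else 0) - (if u = nT then 1 else 0)) := by
            intro u
            rw [hg'def, dv_sub, dv_add, dv_add, dv_sgl, dv_sgl, dv_sgl]
            ring
          have hflow' : IsFlow g' := by
            refine ⟨?_, ?_, ?_, ?_⟩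
            · intro e
              by_cases h1 : e = (nS, nA m); · rw [h1, hg'1]
              by_cases h2 : e = (nA m, nB m); · rw [h2, hg'2]
              by_cases h3 : e = (nB m, nT); · rw [h3, hg'3]
              rw [hg'other e h1 h2 h3]; exact hg.nonneg e
            · intro e
              by_cases h1 : e = (nS, nA m); · rw [h1, hg'1]; omega
              by_cases h2 : e = (nA m, nB m); · rw [h2, hg'2]; omega
              by_cases h3 : e = (nB m, nT); · rw [h3, hg'3]; omega
              rw [hg'other e h1 h2 h3]; exact hg.le_one e
            · intro e hne
              by_cases h1 : e = (nS, nA m); · rw [h1] at hne; exact absurd hg'1 hne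
              by_cases h2 : e = (nA m, nB m); · rw [h2] at hne; exact absurd hg'2 hne
              by_cases h3 : e = (nB m, nT); · rw [h3] at hne; exact absurd hg'3 hne
              rw [hg'other e h1 h2 h3] at hne; exact hg.supp e hne
            · intro u hu1 hu2
              rw [hdvg' u, hg.cons u hu1 hu2]; simp [hu1, hu2]
          have hval' : dv g' nS = dv g nS - 1 := by
            rw [hdvg' nS]; simp
          have hcov' : covered g' = (covered g).erase m := by
            ext x
            rcases eq_or_ne x m with rfl | hx
            · simp only [covered, Finset.mem_filter, Finset.mem_univ, true_and,
                Finset.mem_erase]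
              rw [hg'2]; simp
            · have heq : g' (nA x, nB x) = g (nA x, nB x) := by
                apply hg'other <;> simp [Prod.ext_iff, hx]
              simp only [covered, Finset.mem_filter, Finset.mem_univ, true_and,
                Finset.mem_erase, heq]
              tauto
          have hends' : ends g' = (ends g).erase m := by
            ext x
            rcases eq_or_ne x m with rfl | hx
            · simp only [ends, Finset.mem_filter, Finset.mem_univ, true_and,
                Finset.mem_erase]
              rw [hg'3]; simp
            · have heq : g' (nB x, nT) = g (nB x, nT) := by
                apply hg'other <;> simp [Prod.ext_iff, hx]
              simp only [ends, Finset.mem_filter, Finset.mem_univ, true_and,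
                Finset.mem_erase, heq]
              tauto
          have hcard' : (covered g').card < n := by
            rw [hcov', Finset.card_erase_of_mem hm, hcard]
            have : 0 < (covered g).card := Finset.card_pos.2 hne
            omega
          have hk' : dv g' nS ≤ (k' : ℤ) := by
            rw [hval']; push_cast at hk ⊢; omega
          obtain ⟨C', hC'chain, hC'pair, hC'biU, hC'ends⟩ :=
            IH _ hcard' g' hflow' rfl k' hk'
          have hsub : ∀ i, C' i ⊆ covered g' := by
            intro i; rw [← hC'biU]
            exact Finset.subset_biUnion_of_mem C' (Finset.mem_univ i)
          have hmnot : m ∉ covered g' := by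
            rw [hcov']; exact Finset.notMem_erase m _
          refine ⟨Fin.cons {m} C', ?_, ?_, ?_, ?_⟩
          · intro i
            rcases Fin.eq_zero_or_eq_succ i with rfl | ⟨i', rfl⟩
            · rw [Fin.cons_zero]; simp only [Finset.coe_singleton]
              exact Set.subsingleton_singleton.isChain
            · rw [Fin.cons_succ]; exact hC'chain i'
          · intro i j hij
            rcases Fin.eq_zero_or_eq_succ i with rfl | ⟨i', rfl⟩ <;>
              rcases Fin.eq_zero_or_eq_succ j with rfl | ⟨j', rfl⟩
            · exact absurd rfl hij
            · rw [Fin.cons_zero, Fin.cons_succ]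
              rw [Finset.disjoint_singleton_left]
              exact fun h => hmnot (hsub j' h)
            · rw [Fin.cons_zero, Fin.cons_succ]
              rw [Finset.disjoint_singleton_right]
              exact fun h => hmnot (hsub i' h)
            · rw [Fin.cons_succ, Fin.cons_succ]
              exact hC'pair (fun h => hij (congrArg Fin.succ h))
          · ext z
            simp only [Finset.mem_biUnion, Finset.mem_univ, true_and]
            constructor
            · rintro ⟨i, hi⟩
              rcases Fin.eq_zero_or_eq_succ i with rfl | ⟨i', rfl⟩
              · rw [Fin.cons_zero] at hi; simp at hi; subst hi; exact hm
              · rw [Fin.cons_succ] at hi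
                have := hsub i' hi
                rw [hcov'] at this; exact Finset.mem_of_mem_erase this
            · intro hz
              rcases eq_or_ne z m with rfl | hzm
              · exact ⟨0, by rw [Fin.cons_zero]; simp⟩
              · have : z ∈ covered g' := by
                  rw [hcov']; exact Finset.mem_erase.2 ⟨hzm, hz⟩
                rw [← hC'biU] at this
                simp only [Finset.mem_biUnion, Finset.mem_univ, true_and] at this
                obtain ⟨i', hi'⟩ := this
                exact ⟨i'.succ, by rw [Fin.cons_succ]; exact hi'⟩
          · intro e he
            rcases eq_or_ne e m with rfl | hem
            · refine ⟨0, by rw [Fin.cons_zero]; simp, ?_⟩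
              intro z hz; rw [Fin.cons_zero] at hz
              simp only [Finset.mem_singleton] at hz
              exact le_of_eq hz
            · have : e ∈ ends g' := by
                rw [hends']; exact Finset.mem_erase.2 ⟨hem, he⟩
              obtain ⟨i, hei, hemax⟩ := hC'ends e this
              exact ⟨i.succ, by rw [Fin.cons_succ]; exact hei,
                by rw [Fin.cons_succ]; exact hemax⟩
      · -- m has a predecessor y
        obtain ⟨_, hycov, hyl⟩ := arc_ba hg hy
        have hyt : g (nB y, nT) = 0 := succ_not_end hg hy
        have hym : y ≠ m := ne_of_lt hyl
        set g' : GKN P × GKN P → ℤ :=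
          g - (sgl (nB y) (nA m) + sgl (nA m) (nB m) + sgl (nB m) nT - sgl (nB y) nT)
          with hg'def
        have hg'e : ∀ e, g' e = g e - (if e = (nB y, nA m) then 1 else 0)
            - (if e = (nA m, nB m) then 1 else 0)
            - (if e = (nB m, nT) then 1 else 0)
            + (if e = (nB y, nT) then 1 else 0) := by
          intro e; simp [hg'def, sgl]; ring
        have hg'1 : g' (nB y, nA m) = 0 := by
          rw [hg'e, hy]; simp [Prod.ext_iff, hym]
        have hg'2 : g' (nA m, nB m) = 0 := by
          rw [hg'e, hmcov]; simp [Prod.ext_iff, hym]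
        have hg'3 : g' (nB m, nT) = 0 := by
          rw [hg'e, hbt]; simp [Prod.ext_iff, hym, Ne.symm hym]
        have hg'4 : g' (nB y, nT) = 1 := by
          rw [hg'e, hyt]; simp [Prod.ext_iff, hym]
        have hg'other : ∀ e, e ≠ (nB y, nA m) → e ≠ (nA m, nB m) → e ≠ (nB m, nT) →
            e ≠ (nB y, nT) → g' e = g e := by
          intro e h1 h2 h3 h4; rw [hg'e]; simp [h1, h2, h3, h4]
        have hdvg' : ∀ u, dv g' u = dv g u := by
          intro u
          rw [hg'def, dv_sub, dv_sub, dv_add, dv_add, dv_sgl, dv_sgl, dv_sgl, dv_sgl]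
          ring
        have hflow' : IsFlow g' := by
          refine ⟨?_, ?_, ?_, ?_⟩
          · intro e
            by_cases h1 : e = (nB y, nA m); · rw [h1, hg'1]
            by_cases h2 : e = (nA m, nB m); · rw [h2, hg'2]
            by_cases h3 : e = (nB m, nT); · rw [h3, hg'3]
            by_cases h4 : e = (nB y, nT); · rw [h4, hg'4]; omega
            rw [hg'other e h1 h2 h3 h4]; exact hg.nonneg e
          · intro e
            by_cases h1 : e = (nB y, nA m); · rw [h1, hg'1]; omega
            by_cases h2 : e = (nA m, nB m); · rw [h2, hg'2]; omega
            by_cases h3 : e = (nB m, nT); · rw [h3, hg'3]; omega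
            by_cases h4 : e = (nB y, nT); · rw [h4, hg'4]
            rw [hg'other e h1 h2 h3 h4]; exact hg.le_one e
          · intro e hne
            by_cases h1 : e = (nB y, nA m); · rw [h1] at hne; exact absurd hg'1 hne
            by_cases h2 : e = (nA m, nB m); · rw [h2] at hne; exact absurd hg'2 hne
            by_cases h3 : e = (nB m, nT); · rw [h3] at hne; exact absurd hg'3 hne
            by_cases h4 : e = (nB y, nT)
            · rw [h4]; right; right; right; exact ⟨y, rfl⟩
            rw [hg'other e h1 h2 h3 h4] at hne; exact hg.supp e hne
          · intro u hu1 hu2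
            rw [hdvg' u]; exact hg.cons u hu1 hu2
        have hcov' : covered g' = (covered g).erase m := by
          ext x
          rcases eq_or_ne x m with rfl | hx
          · simp only [covered, Finset.mem_filter, Finset.mem_univ, true_and,
              Finset.mem_erase]
            rw [hg'2]; simp
          · have heq : g' (nA x, nB x) = g (nA x, nB x) := by
              apply hg'other <;> simp [Prod.ext_iff, hx]
            simp only [covered, Finset.mem_filter, Finset.mem_univ, true_and,
              Finset.mem_erase, heq]
            tauto
        have hends' : ends g' = insert y ((ends g).erase m) := by
          ext x
          rcases eq_or_ne x y with rfl | hxy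
          · simp only [ends, Finset.mem_filter, Finset.mem_univ, true_and,
              Finset.mem_insert]
            rw [hg'4]; simp
          · rcases eq_or_ne x m with rfl | hxm
            · simp only [ends, Finset.mem_filter, Finset.mem_univ, true_and,
                Finset.mem_insert, Finset.mem_erase]
              rw [hg'3]; simp [Ne.symm hym]
            · have heq : g' (nB x, nT) = g (nB x, nT) := by
                apply hg'other <;> simp [Prod.ext_iff, hxy, hxm]
              simp only [ends, Finset.mem_filter, Finset.mem_univ, true_and,
                Finset.mem_insert, Finset.mem_erase, heq]
              tauto
        have hcard' : (covered g').card < n := by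
          rw [hcov', Finset.card_erase_of_mem hm, hcard]
          have : 0 < (covered g).card := Finset.card_pos.2 hne
          omega
        have hk' : dv g' nS ≤ (k : ℤ) := by rw [hdvg']; exact hk
        obtain ⟨C', hC'chain, hC'pair, hC'biU, hC'ends⟩ :=
          IH _ hcard' g' hflow' rfl k hk'
        have hsub : ∀ i, C' i ⊆ covered g' := by
          intro i; rw [← hC'biU]
          exact Finset.subset_biUnion_of_mem C' (Finset.mem_univ i)
        have hmnot : m ∉ covered g' := by
          rw [hcov']; exact Finset.notMem_erase m _
        have hyends' : y ∈ ends g' := by rw [hends']; exact Finset.mem_insert_self y _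
        obtain ⟨i0, hi0, hmax0⟩ := hC'ends y hyends'
        set C : Fin k → Finset P := Function.update C' i0 (insert m (C' i0)) with hCdef
        have hCi0 : C i0 = insert m (C' i0) := by rw [hCdef, Function.update_self]
        have hCne : ∀ i, i ≠ i0 → C i = C' i := by
          intro i hi; rw [hCdef, Function.update_of_ne hi]
        refine ⟨C, ?_, ?_, ?_, ?_⟩
        · intro i
          by_cases hi : i = i0
          · rw [hi, hCi0]
            rw [Finset.coe_insert]
            refine (hC'chain i0).insert ?_
            intro b hb _
            right
            exact le_trans (hmax0 b hb) (le_of_lt hyl)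
          · rw [hCne i hi]; exact hC'chain i
        · intro i j hij
          by_cases hi : i = i0
          · have hj : j ≠ i0 := fun h => hij (hi.trans h.symm)
            rw [hi, hCi0, hCne j hj]
            rw [Finset.disjoint_insert_left]
            exact ⟨fun h => hmnot (hsub j h),
              hC'pair (fun h => hij (hi.trans h))⟩
          · by_cases hj : j = i0
            · subst hj
              rw [hCne i hi, hCi0]
              rw [Finset.disjoint_insert_right]
              exact ⟨fun h => hmnot (hsub i h), hC'pair hi⟩
            · rw [hCne i hi, hCne j hj]
              exact hC'pair hij
        · ext z
          simp only [Finset.mem_biUnion, Finset.mem_univ, true_and]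
          have hcovins : covered g = insert m (covered g') := by
            rw [hcov', Finset.insert_erase hm]
          constructor
          · rintro ⟨i, hi⟩
            by_cases hii : i = i0
            · rw [hii, hCi0] at hi
              rcases Finset.mem_insert.1 hi with rfl | hz
              · exact hm
              · rw [hcovins]
                exact Finset.mem_insert_of_mem (hsub i0 hz)
            · rw [hCne i hii] at hi
              rw [hcovins]
              exact Finset.mem_insert_of_mem (hsub i hi)
          · intro hz
            rcases eq_or_ne z m with rfl | hzm
            · exact ⟨i0, by rw [hCi0]; exact Finset.mem_insert_self z _⟩
            · have : z ∈ covered g' := by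
                rw [hcov']; exact Finset.mem_erase.2 ⟨hzm, hz⟩
              rw [← hC'biU] at this
              simp only [Finset.mem_biUnion, Finset.mem_univ, true_and] at this
              obtain ⟨i, hi⟩ := this
              refine ⟨i, ?_⟩
              by_cases hii : i = i0
              · subst hii; rw [hCi0]; exact Finset.mem_insert_of_mem hi
              · rw [hCne i hii]; exact hi
        · intro e he
          have hey : e ≠ y := by
            intro h; rw [h] at he
            rw [mem_ends hg] at he; rw [hyt] at he; omega
          rcases eq_or_ne e m with rfl | hem
          · refine ⟨i0, by rw [hCi0]; exact Finset.mem_insert_self e _, ?_⟩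
            intro z hz
            rw [hCi0] at hz
            rcases Finset.mem_insert.1 hz with rfl | hz'
            · exact le_refl z
            · exact le_trans (hmax0 z hz') (le_of_lt hyl)
          · have : e ∈ ends g' := by
              rw [hends']
              exact Finset.mem_insert_of_mem (Finset.mem_erase.2 ⟨hem, he⟩)
            obtain ⟨i, hei, hemax⟩ := hC'ends e this
            by_cases hii : i = i0
            · exfalso
              subst hii
              exact hey (le_antisymm (hmax0 e hei) (hemax y hi0))
            · exact ⟨i, by rw [hCne i hii]; exact hei, by rw [hCne i hii]; exact hemax⟩

end GKaux

namespace GKaux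

attribute [local instance] Classical.propDecidable

variable {P : Type*} [PartialOrder P] [Fintype P] [DecidableEq P]

section ChainsToFlow

variable {k : ℕ} (C : Fin k → Finset P)

def Mn (x : P) : Prop := ∃ i, x ∈ C i ∧ ∀ z ∈ C i, ¬ z < x
def Mx (x : P) : Prop := ∃ i, x ∈ C i ∧ ∀ z ∈ C i, ¬ x < z
def Csc (x y : P) : Prop :=
  x < y ∧ ∃ i, x ∈ C i ∧ y ∈ C i ∧ ∀ z ∈ C i, ¬ (x < z ∧ z < y)

noncomputable def cFlow : GKN P × GKN P → ℤ := fun e =>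
  match e with
  | (none, some (some (x, false))) => if Mn C x then 1 else 0
  | (some (some (x, false)), some (some (y, true))) =>
      if x = y ∧ x ∈ Finset.univ.biUnion C then 1 else 0
  | (some (some (x, true)), some (some (y, false))) => if Csc C x y then 1 else 0
  | (some (some (x, true)), some none) => if Mx C x then 1 else 0
  | _ => 0

lemma cFlow_sa (x : P) : cFlow C (nS, nA x) = if Mn C x then 1 else 0 := rfl
lemma cFlow_ab (x y : P) : cFlow C (nA x, nB y) =
    if x = y ∧ x ∈ Finset.univ.biUnion C then 1 else 0 := rfl
lemma cFlow_ba (x y : P) : cFlow C (nB x, nA y) = if Csc C x y then 1 else 0 := rfl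
lemma cFlow_bt (x : P) : cFlow C (nB x, nT) = if Mx C x then 1 else 0 := rfl

lemma cFlow_01 (e : GKN P × GKN P) : cFlow C e = 0 ∨ cFlow C e = 1 := by
  obtain ⟨u, v⟩ := e
  rcases u with _ | (_ | ⟨x, bx⟩) <;> rcases v with _ | (_ | ⟨y, by'⟩) <;>
    first
      | (left; rfl)
      | (cases bx <;> cases by' <;> (try (left; rfl)) <;>
          (simp only [cFlow]; split <;> simp))
      | (cases bx <;> (try (left; rfl)) <;> (simp only [cFlow]; split <;> simp))
      | (cases by' <;> (try (left; rfl)) <;> (simp only [cFlow]; split <;> simp))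

variable (hC : ∀ i, IsChain (· ≤ ·) ((C i : Set P)))
  (hD : Pairwise fun i j => Disjoint (C i) (C j))

include hC hD

lemma chain_unique
    {x : P} {i j : Fin k} (hi : x ∈ C i) (hj : x ∈ C j) : i = j := by
  by_contra hne
  exact Finset.disjoint_left.1 (hD hne) hi hj

lemma chain_cmp {i : Fin k} {a b : P} (ha : a ∈ C i) (hb : b ∈ C i) :
    a ≤ b ∨ b ≤ a := by
  rcases eq_or_ne a b with rfl | hne
  · left; exact le_refl a
  · rcases hC i ha hb hne with h | h
    · left; exact h
    · right; exact h

/-- conservation equation at `a x` (pure combinatorics of chains) -/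
lemma chain_in (x : P) :
    (if x ∈ Finset.univ.biUnion C then (1:ℤ) else 0) =
      (if Mn C x then 1 else 0) + ∑ y, (if Csc C y x then (1:ℤ) else 0) := by
  by_cases hx : x ∈ Finset.univ.biUnion C
  · obtain ⟨i, _, hxi⟩ := Finset.mem_biUnion.1 hx
    by_cases hmin : ∃ z ∈ C i, z < x
    · obtain ⟨z, hz, hzx⟩ := hmin
      have hMn : ¬ Mn C x := by
        rintro ⟨j, hxj, hj⟩
        have hij : i = j := chain_unique C hC hD hxi hxj
        exact hj z (hij ▸ hz) hzx
      obtain ⟨y₀, hy₀, hy₀max⟩ := (by obtain ⟨m, hm⟩ := Finset.exists_maximal (s := (C i).filter (· < x)) ⟨z, Finset.mem_filter.2 ⟨hz, hzx⟩⟩; exact ⟨m, hm.1, fun w hw hlt => lt_irrefl _ (lt_of_lt_of_le hlt (hm.2 hw hlt.le))⟩ :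
          ∃ m ∈ (C i).filter (· < x), ∀ w ∈ (C i).filter (· < x), ¬ m < w)
      have hy₀i : y₀ ∈ C i := (Finset.mem_filter.1 hy₀).1
      have hy₀x : y₀ < x := (Finset.mem_filter.1 hy₀).2
      have hmid : ∀ w ∈ C i, ¬ (y₀ < w ∧ w < x) := by
        rintro w hw ⟨h1, h2⟩
        exact hy₀max w (Finset.mem_filter.2 ⟨hw, h2⟩) h1
      have hCsc : Csc C y₀ x := ⟨hy₀x, i, hy₀i, hxi, hmid⟩
      have huniq : ∀ y, Csc C y x → y = y₀ := by
        rintro y ⟨hyx, j, hyj, hxj, hj⟩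
        have hji : j = i := chain_unique C hC hD hxj hxi
        subst hji
        rcases chain_cmp C hC hD hyj hy₀i with h | h
        · rcases eq_or_lt_of_le h with h | h
          · exact h
          · exact absurd ⟨h, hy₀x⟩ (hj y₀ hy₀i)
        · rcases eq_or_lt_of_le h with h | h
          · exact h.symm
          · exact absurd ⟨h, hyx⟩ (hmid y hyj)
      have hsum : (∑ y, (if Csc C y x then (1:ℤ) else 0)) = 1 := by
        rw [Finset.sum_eq_single_of_mem y₀ (Finset.mem_univ y₀)]
        · simp [hCsc]
        · intro y _ hy
          have : ¬ Csc C y x := fun h => hy (huniq y h)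
          simp [this]
      rw [hsum, if_pos hx, if_neg hMn]
      norm_num
    · push_neg at hmin
      have hMn : Mn C x := ⟨i, hxi, fun z hz => hmin z hz⟩
      have hsum : (∑ y, (if Csc C y x then (1:ℤ) else 0)) = 0 := by
        apply Finset.sum_eq_zero
        intro y _
        have : ¬ Csc C y x := by
          rintro ⟨hyx, j, hyj, hxj, _⟩
          have hji : j = i := chain_unique C hC hD hxj hxi
          exact hmin y (hji ▸ hyj) hyx
        simp [this]
      rw [hsum, if_pos hx, if_pos hMn]; ring
  · have hMn : ¬ Mn C x := by
      rintro ⟨j, hxj, _⟩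
      exact hx (Finset.mem_biUnion.2 ⟨j, Finset.mem_univ j, hxj⟩)
    have hsum : (∑ y, (if Csc C y x then (1:ℤ) else 0)) = 0 := by
      apply Finset.sum_eq_zero
      intro y _
      have : ¬ Csc C y x := by
        rintro ⟨hyx, j, hyj, hxj, _⟩
        exact hx (Finset.mem_biUnion.2 ⟨j, Finset.mem_univ j, hxj⟩)
      simp [this]
    rw [hsum, if_neg hx, if_neg hMn]; ring

/-- conservation equation at `b x` -/
lemma chain_out (x : P) :
    (if x ∈ Finset.univ.biUnion C then (1:ℤ) else 0) =
      (if Mx C x then 1 else 0) + ∑ y, (if Csc C x y then (1:ℤ) else 0) := by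
  by_cases hx : x ∈ Finset.univ.biUnion C
  · obtain ⟨i, _, hxi⟩ := Finset.mem_biUnion.1 hx
    by_cases hmax : ∃ z ∈ C i, x < z
    · obtain ⟨z, hz, hzx⟩ := hmax
      have hMx : ¬ Mx C x := by
        rintro ⟨j, hxj, hj⟩
        have hij : i = j := chain_unique C hC hD hxi hxj
        exact hj z (hij ▸ hz) hzx
      obtain ⟨y₀, hy₀, hy₀min⟩ := (by obtain ⟨m, hm⟩ := Finset.exists_minimal (s := (C i).filter (x < ·)) ⟨z, Finset.mem_filter.2 ⟨hz, hzx⟩⟩; exact ⟨m, hm.1, fun w hw hlt => lt_irrefl _ (lt_of_lt_of_le hlt (hm.2 hw hlt.le))⟩ :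
          ∃ m ∈ (C i).filter (x < ·), ∀ w ∈ (C i).filter (x < ·), ¬ w < m)
      have hy₀i : y₀ ∈ C i := (Finset.mem_filter.1 hy₀).1
      have hy₀x : x < y₀ := (Finset.mem_filter.1 hy₀).2
      have hmid : ∀ w ∈ C i, ¬ (x < w ∧ w < y₀) := by
        rintro w hw ⟨h1, h2⟩
        exact hy₀min w (Finset.mem_filter.2 ⟨hw, h1⟩) h2
      have hCsc : Csc C x y₀ := ⟨hy₀x, i, hxi, hy₀i, hmid⟩
      have huniq : ∀ y, Csc C x y → y = y₀ := by
        rintro y ⟨hyx, j, hxj, hyj, hj⟩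
        have hji : j = i := chain_unique C hC hD hxj hxi
        subst hji
        rcases chain_cmp C hC hD hyj hy₀i with h | h
        · rcases eq_or_lt_of_le h with h | h
          · exact h
          · exact absurd ⟨hyx, h⟩ (hmid y hyj)
        · rcases eq_or_lt_of_le h with h | h
          · exact h.symm
          · exact absurd ⟨hy₀x, h⟩ (hj y₀ hy₀i)
      have hsum : (∑ y, (if Csc C x y then (1:ℤ) else 0)) = 1 := by
        rw [Finset.sum_eq_single_of_mem y₀ (Finset.mem_univ y₀)]
        · simp [hCsc]
        · intro y _ hy
          have : ¬ Csc C x y := fun h => hy (huniq y h)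
          simp [this]
      rw [hsum, if_pos hx, if_neg hMx]
      norm_num
    · push_neg at hmax
      have hMx : Mx C x := ⟨i, hxi, fun z hz => hmax z hz⟩
      have hsum : (∑ y, (if Csc C x y then (1:ℤ) else 0)) = 0 := by
        apply Finset.sum_eq_zero
        intro y _
        have : ¬ Csc C x y := by
          rintro ⟨hyx, j, hxj, hyj, _⟩
          have hji : j = i := chain_unique C hC hD hxj hxi
          exact hmax y (hji ▸ hyj) hyx
        simp [this]
      rw [hsum, if_pos hx, if_pos hMx]; ring
  · have hMx : ¬ Mx C x := by
      rintro ⟨j, hxj, _⟩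
      exact hx (Finset.mem_biUnion.2 ⟨j, Finset.mem_univ j, hxj⟩)
    have hsum : (∑ y, (if Csc C x y then (1:ℤ) else 0)) = 0 := by
      apply Finset.sum_eq_zero
      intro y _
      have : ¬ Csc C x y := by
        rintro ⟨hyx, j, hxj, hyj, _⟩
        exact hx (Finset.mem_biUnion.2 ⟨j, Finset.mem_univ j, hxj⟩)
      simp [this]
    rw [hsum, if_neg hx, if_neg hMx]; ring

lemma cFlow_isFlow : IsFlow (cFlow C) := by
  refine ⟨?_, ?_, ?_, ?_⟩
  · intro e; rcases cFlow_01 C e with h | h <;> rw [h] <;> omega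
  · intro e; rcases cFlow_01 C e with h | h <;> rw [h] <;> omega
  · rintro ⟨u, v⟩ hne
    rcases u with _ | (_ | ⟨x, bx⟩) <;> rcases v with _ | (_ | ⟨y, by'⟩)
    · exact absurd rfl hne
    · exact absurd rfl hne
    · cases by'
      · left; exact ⟨y, rfl⟩
      · exact absurd rfl hne
    · exact absurd rfl hne
    · exact absurd rfl hne
    · cases by' <;> exact absurd rfl hne
    · cases bx <;> exact absurd rfl hne
    · cases bx
      · exact absurd rfl hne
      · right; right; right; exact ⟨x, rfl⟩
    · cases bx <;> cases by'
      · exact absurd rfl hne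
      · by_cases h : x = y ∧ x ∈ Finset.univ.biUnion C
        · right; left; exact ⟨x, by simp [nA, nB, h.1]⟩
        · have h0 : cFlow C (some (some (x, false)), some (some (y, true))) = 0 := by
            show (if x = y ∧ x ∈ Finset.univ.biUnion C then (1:ℤ) else 0) = 0
            rw [if_neg h]
          exact absurd h0 hne
      · by_cases h : Csc C x y
        · right; right; left; exact ⟨x, y, h.1, by simp [nA, nB]⟩
        · have h0 : cFlow C (some (some (x, true)), some (some (y, false))) = 0 := by
            show (if Csc C x y then (1:ℤ) else 0) = 0
            rw [if_neg h]
          exact absurd h0 hne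
      · exact absurd rfl hne
  · intro u hu1 hu2
    rcases u with _ | (_ | ⟨x, bx⟩)
    · exact absurd rfl hu1
    · exact absurd rfl hu2
    · cases bx
      · -- a x
        show dv (cFlow C) (nA x) = 0
        have hout : (∑ v, cFlow C (nA x, v)) =
            if x ∈ Finset.univ.biUnion C then (1:ℤ) else 0 := by
          rw [sum_GKN (fun v => cFlow C (nA x, v))]
          have h1 : cFlow C (nA x, nS) = 0 := rfl
          have h2 : cFlow C (nA x, nT) = 0 := rfl
          have h3 : (∑ y, cFlow C (nA x, nA y)) = 0 :=
            Finset.sum_eq_zero fun y _ => rfl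
          have h4 : (∑ y, cFlow C (nA x, nB y)) =
              if x ∈ Finset.univ.biUnion C then (1:ℤ) else 0 := by
            rw [Finset.sum_eq_single_of_mem x (Finset.mem_univ x)]
            · rw [cFlow_ab]
              by_cases hx : x ∈ Finset.univ.biUnion C <;> simp [hx]
            · intro y _ hy
              rw [cFlow_ab]
              simp [Ne.symm hy]
          rw [h1, h2, h3, h4]; ring
        have hin : (∑ v, cFlow C (v, nA x)) =
            (if Mn C x then (1:ℤ) else 0) + ∑ y, (if Csc C y x then (1:ℤ) else 0) := by
          rw [sum_GKN (fun v => cFlow C (v, nA x))]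
          have h1 : cFlow C (nS, nA x) = if Mn C x then 1 else 0 := rfl
          have h2 : cFlow C (nT, nA x) = 0 := rfl
          have h3 : (∑ y, cFlow C (nA y, nA x)) = 0 :=
            Finset.sum_eq_zero fun y _ => rfl
          have h4 : (∑ y, cFlow C (nB y, nA x)) =
              ∑ y, (if Csc C y x then (1:ℤ) else 0) :=
            Finset.sum_congr rfl fun y _ => rfl
          rw [h1, h2, h3, h4]; ring
        rw [dv, hout, hin, chain_in C hC hD x]
        ring
      · -- b x
        show dv (cFlow C) (nB x) = 0
        have hout : (∑ v, cFlow C (nB x, v)) =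
            (if Mx C x then (1:ℤ) else 0) + ∑ y, (if Csc C x y then (1:ℤ) else 0) := by
          rw [sum_GKN (fun v => cFlow C (nB x, v))]
          have h1 : cFlow C (nB x, nS) = 0 := rfl
          have h2 : cFlow C (nB x, nT) = if Mx C x then 1 else 0 := rfl
          have h3 : (∑ y, cFlow C (nB x, nB y)) = 0 :=
            Finset.sum_eq_zero fun y _ => rfl
          have h4 : (∑ y, cFlow C (nB x, nA y)) =
              ∑ y, (if Csc C x y then (1:ℤ) else 0) :=
            Finset.sum_congr rfl fun y _ => rfl
          rw [h1, h2, h3, h4]; ring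
        have hin : (∑ v, cFlow C (v, nB x)) =
            if x ∈ Finset.univ.biUnion C then (1:ℤ) else 0 := by
          rw [sum_GKN (fun v => cFlow C (v, nB x))]
          have h1 : cFlow C (nS, nB x) = 0 := rfl
          have h2 : cFlow C (nT, nB x) = 0 := rfl
          have h3 : (∑ y, cFlow C (nB y, nB x)) = 0 :=
            Finset.sum_eq_zero fun y _ => rfl
          have h4 : (∑ y, cFlow C (nA y, nB x)) =
              if x ∈ Finset.univ.biUnion C then (1:ℤ) else 0 := by
            rw [Finset.sum_eq_single_of_mem x (Finset.mem_univ x)]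
            · rw [cFlow_ab]
              by_cases hx : x ∈ Finset.univ.biUnion C <;> simp [hx]
            · intro y _ hy
              rw [cFlow_ab]
              simp [hy]
          rw [h1, h2, h3, h4]; ring
        rw [dv, hout, hin, chain_out C hC hD x]
        ring

lemma cFlow_value_le : dv (cFlow C) nS ≤ (k : ℤ) := by
  rw [value_eq (cFlow_isFlow C hC hD)]
  have h1 : (∑ x, cFlow C (nS, nA x)) =
      ((Finset.univ.filter (fun x => Mn C x)).card : ℤ) := by
    rw [← Finset.sum_boole]
    exact Finset.sum_congr rfl fun x _ => rfl
  rw [h1]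
  have h2 : (Finset.univ.filter (fun x => Mn C x)).card ≤ k := by
    rcases Nat.eq_zero_or_pos k with hk | hk
    · subst hk
      have : Finset.univ.filter (fun x : P => Mn C x) = ∅ := by
        apply Finset.eq_empty_of_forall_notMem
        intro x hx
        obtain ⟨i, _, _⟩ := (Finset.mem_filter.1 hx).2
        exact absurd i.2 (by omega)
      rw [this]; simp
    · have : Nonempty (Fin k) := ⟨⟨0, hk⟩⟩
      inhabit (Fin k)
      have hcard : (Finset.univ.filter (fun x : P => Mn C x)).card ≤
          (Finset.univ : Finset (Fin k)).card := by
        apply Finset.card_le_card_of_injOn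
          (fun x => if h : Mn C x then h.choose else default)
        · intro x _; exact Finset.mem_univ _
        · intro x hx x' hx' hxx'
          have hmx : Mn C x := (Finset.mem_filter.1 hx).2
          have hmx' : Mn C x' := (Finset.mem_filter.1 hx').2
          simp only [dif_pos hmx, dif_pos hmx'] at hxx'
          obtain ⟨hxi, hximin⟩ := hmx.choose_spec
          obtain ⟨hxi', hximin'⟩ := hmx'.choose_spec
          rw [← hxx'] at hxi' hximin'
          rcases chain_cmp C hC hD hxi hxi' with h | h
          · rcases eq_or_lt_of_le h with h | h
            · exact h
            · exact absurd h (hximin' x hxi)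
          · rcases eq_or_lt_of_le h with h | h
            · exact h.symm
            · exact absurd h (hximin x' hxi')
      simpa using hcard
  omega

lemma cFlow_profit : ((covered (cFlow C)).card : ℤ) =
    ((Finset.univ.biUnion C).card : ℤ) := by
  have : covered (cFlow C) = Finset.univ.biUnion C := by
    ext x
    rw [mem_covered (cFlow_isFlow C hC hD), cFlow_ab]
    by_cases hx : x ∈ Finset.univ.biUnion C <;> simp [hx]
  rw [this]

end ChainsToFlow

end GKaux
/-- `Δ_k(P)`: the largest cardinality of a subset of the finite poset `P` that can be
partitioned into `k` disjoint chains (`Δ₀ = 0`). -/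
noncomputable def Delta (P : Type*) [PartialOrder P] [Fintype P] [DecidableEq P]
    (k : ℕ) : ℕ :=
  sSup {n | ∃ C : Fin k → Finset P,
    (∀ i, IsChain (· ≤ ·) (C i : Set P)) ∧
    (Pairwise fun i j => Disjoint (C i) (C j)) ∧
    n = (Finset.univ.biUnion C).card}

namespace GKaux

attribute [local instance] Classical.propDecidable

variable (P : Type*) [PartialOrder P] [Fintype P] [DecidableEq P]

def DeltaSet (k : ℕ) : Set ℕ :=
  {n | ∃ C : Fin k → Finset P,
    (∀ i, IsChain (· ≤ ·) (C i : Set P)) ∧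
    (Pairwise fun i j => Disjoint (C i) (C j)) ∧
    n = (Finset.univ.biUnion C).card}

lemma Delta_eq_sSup (k : ℕ) : Delta P k = sSup (DeltaSet P k) := rfl

lemma DeltaSet_zero_mem (k : ℕ) : 0 ∈ DeltaSet P k := by
  refine ⟨fun _ => ∅, fun i => by simp, fun i j _ => by simp, ?_⟩
  rw [eq_comm, Finset.card_eq_zero]
  apply Finset.eq_empty_of_forall_notMem
  intro x hx; simp at hx

lemma DeltaSet_bdd {k n : ℕ} (hn : n ∈ DeltaSet P k) : n ≤ Fintype.card P := by
  obtain ⟨C, _, _, hcard⟩ := hn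
  rw [hcard]
  exact Finset.card_le_univ _

lemma Delta_mem (k : ℕ) : Delta P k ∈ DeltaSet P k := by
  rw [Delta_eq_sSup]
  exact Nat.sSup_mem ⟨0, DeltaSet_zero_mem P k⟩
    ⟨Fintype.card P, fun n hn => DeltaSet_bdd P hn⟩

lemma le_Delta {k n : ℕ} (hn : n ∈ DeltaSet P k) : n ≤ Delta P k := by
  rw [Delta_eq_sSup]
  exact le_csSup ⟨Fintype.card P, fun m hm => DeltaSet_bdd P hm⟩ hn

lemma Delta_le_card (k : ℕ) : Delta P k ≤ Fintype.card P :=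
  DeltaSet_bdd P (Delta_mem P k)

lemma Delta_mono : Monotone (Delta P) := by
  intro j k hjk
  obtain ⟨C, hch, hpair, hn⟩ := Delta_mem P j
  apply le_Delta P
  refine ⟨fun i => if h : (i : ℕ) < j then C ⟨i, h⟩ else ∅, ?_, ?_, ?_⟩
  · intro i
    by_cases h : (i : ℕ) < j
    · simp only [dif_pos h]; exact hch _
    · simp only [dif_neg h]; simp
  · intro i i' hii'
    by_cases h : (i : ℕ) < j
    · by_cases h' : (i' : ℕ) < j
      · simp only [dif_pos h, dif_pos h']
        apply hpair
        intro he
        simp only [Fin.mk.injEq] at he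
        exact hii' (Fin.ext he)
      · simp only [dif_neg h']; exact Finset.disjoint_empty_right _
    · simp only [dif_neg h]; exact Finset.disjoint_empty_left _
  · have hbi : Finset.univ.biUnion (fun i : Fin k => if h : (i : ℕ) < j then C ⟨i, h⟩ else ∅)
        = Finset.univ.biUnion C := by
      ext z
      simp only [Finset.mem_biUnion, Finset.mem_univ, true_and]
      constructor
      · rintro ⟨i, hi⟩
        by_cases h : (i : ℕ) < j
        · simp only [dif_pos h] at hi; exact ⟨⟨i, h⟩, hi⟩
        · simp only [dif_neg h] at hi; simp at hi
      · rintro ⟨i, hi⟩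
        have h : ((⟨(i : ℕ), lt_of_lt_of_le i.isLt hjk⟩ : Fin k) : ℕ) < j := i.isLt
        refine ⟨⟨(i : ℕ), lt_of_lt_of_le i.isLt hjk⟩, ?_⟩
        simp only [dif_pos h]
        have he : (⟨((⟨(i : ℕ), lt_of_lt_of_le i.isLt hjk⟩ : Fin k) : ℕ), h⟩ : Fin j) = i :=
          Fin.ext rfl
        rw [he]; exact hi
    rw [hn, hbi]

lemma Delta_zero : Delta P 0 = 0 := by
  obtain ⟨C, _, _, hn⟩ := Delta_mem P 0
  rw [hn]
  rw [Finset.univ_eq_empty]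
  simp

lemma Delta_card_eq : Delta P (Fintype.card P) = Fintype.card P := by
  refine le_antisymm (Delta_le_card P _) (le_Delta P ?_)
  set e := (Fintype.equivFin P).symm with he
  refine ⟨fun i => {e i}, fun i => by simp, ?_, ?_⟩
  · intro i j hij
    rw [Finset.disjoint_singleton]
    exact e.injective.ne hij
  · have : Finset.univ.biUnion (fun i => ({e i} : Finset P)) = Finset.univ := by
      ext z
      simp only [Finset.mem_biUnion, Finset.mem_univ, true_and, iff_true,
        Finset.mem_singleton]
      exact ⟨Fintype.equivFin P z, by simp [he]⟩
    rw [this, Finset.card_univ]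

variable {P}

lemma flow_le_Delta {g : GKN P × GKN P → ℤ} (hg : IsFlow g) {k : ℕ}
    (hk : dv g nS ≤ (k : ℤ)) : (covered g).card ≤ Delta P k := by
  obtain ⟨C, h1, h2, h3, _⟩ := flow_to_chains (covered g).card g hg rfl k hk
  exact le_Delta P ⟨C, h1, h2, by rw [h3]⟩

lemma Delta_concave (k : ℕ) (hk : 1 ≤ k) :
    Delta P (k + 1) + Delta P (k - 1) ≤ 2 * Delta P k := by
  obtain ⟨CA, hA1, hA2, hA3⟩ := Delta_mem P (k + 1)
  obtain ⟨CB, hB1, hB2, hB3⟩ := Delta_mem P (k - 1)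
  have hgA : IsFlow (cFlow CA) := cFlow_isFlow CA hA1 hA2
  have hgB : IsFlow (cFlow CB) := cFlow_isFlow CB hB1 hB2
  set gA := cFlow CA with hgAdef
  set gB := cFlow CB with hgBdef
  have hvA : dv gA nS ≤ ((k : ℤ) + 1) := by
    have h := cFlow_value_le CA hA1 hA2
    rw [← hgAdef] at h
    push_cast at h ⊢; omega
  have hvB : dv gB nS ≤ ((k : ℤ) - 1) := by
    have h := cFlow_value_le CB hB1 hB2
    rw [← hgBdef] at h
    have hc : (((k - 1 : ℕ)) : ℤ) = (k : ℤ) - 1 := by omega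
    omega
  have hpA : ((covered gA).card : ℤ) = (Delta P (k + 1) : ℤ) := by
    rw [cFlow_profit CA hA1 hA2, hA3]
  have hpB : ((covered gB).card : ℤ) = (Delta P (k - 1) : ℤ) := by
    rw [cFlow_profit CB hB1 hB2, hB3]
  by_cases hle : dv gA nS ≤ (k : ℤ)
  · have h1 : (covered gA).card ≤ Delta P k := flow_le_Delta hgA hle
    have h2 : Delta P (k - 1) ≤ Delta P k := Delta_mono P (by omega)
    omega
  · push_neg at hle
    have hvA1 : dv gA nS = (k : ℤ) + 1 := by omega
    have hvBnn : 0 ≤ dv gB nS := value_nonneg hgB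
    set d := gA - gB with hddef
    have hdS : 1 ≤ dv d nS := by
      rw [hddef, dv_sub]; omega
    obtain ⟨w, p, hwv, hwneg, hbet, hp1, hp2, hp3⟩ := extract (mass d) d rfl nS hdS
    have hwt : w = nT := by
      rcases w with _ | (_ | ⟨x, bx⟩)
      · exact absurd rfl hwv
      · rfl
      · exfalso
        cases bx
        · have hz : dv d (nA x) = 0 := by
            rw [hddef, dv_sub, hgA.cons _ (by simp) (by simp),
              hgB.cons _ (by simp) (by simp)]
            ring
          rw [show (some (some (x, false)) : GKN P) = nA x from rfl] at hwneg
          omega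
        · have hz : dv d (nB x) = 0 := by
            rw [hddef, dv_sub, hgA.cons _ (by simp) (by simp),
              hgB.cons _ (by simp) (by simp)]
            ring
          rw [show (some (some (x, true)) : GKN P) = nB x from rfl] at hwneg
          omega
    subst hwt
    have hdee : ∀ e, d e = gA e - gB e := fun e => rfl
    have hpd0 : ∀ e, p e ≠ 0 → d e ≠ 0 := by
      intro e hpe
      rcases hbet e with ⟨h1, h2⟩ | ⟨h1, h2⟩ <;> omega
    set gA' := gA - p with hgA'def
    set gB' := gB + p with hgB'def
    have hgA'e : ∀ e, gA' e = gA e - p e := fun e => rfl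
    have hgB'e : ∀ e, gB' e = gB e + p e := fun e => rfl
    have hgA' : IsFlow gA' := by
      refine ⟨?_, ?_, ?_, ?_⟩
      · intro e
        have h1 := hgA.nonneg e; have h2 := hgA.le_one e
        have h3 := hgB.nonneg e; have h4 := hgB.le_one e
        have h5 := hdee e; have h6 := hgA'e e
        rcases hbet e with ⟨hb1, hb2⟩ | ⟨hb1, hb2⟩ <;> omega
      · intro e
        have h1 := hgA.nonneg e; have h2 := hgA.le_one e
        have h3 := hgB.nonneg e; have h4 := hgB.le_one e
        have h5 := hdee e; have h6 := hgA'e e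
        rcases hbet e with ⟨hb1, hb2⟩ | ⟨hb1, hb2⟩ <;> omega
      · intro e hne
        by_cases hA : gA e = 0
        · have hgBne : gB e ≠ 0 := by
            have h6 := hgA'e e
            have h5 := hdee e
            by_cases hpe : p e = 0
            · intro _; apply hne; omega
            · have := hpd0 e hpe; omega
          exact hgB.supp e hgBne
        · exact hgA.supp e hA
      · intro u hu1 hu2
        rw [hgA'def, dv_sub, hgA.cons u hu1 hu2, hp3 u (Ne.symm (Ne.symm hu1)) hu2]
        ring
    have hgB' : IsFlow gB' := by
      refine ⟨?_, ?_, ?_, ?_⟩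
      · intro e
        have h1 := hgA.nonneg e; have h2 := hgA.le_one e
        have h3 := hgB.nonneg e; have h4 := hgB.le_one e
        have h5 := hdee e; have h6 := hgB'e e
        rcases hbet e with ⟨hb1, hb2⟩ | ⟨hb1, hb2⟩ <;> omega
      · intro e
        have h1 := hgA.nonneg e; have h2 := hgA.le_one e
        have h3 := hgB.nonneg e; have h4 := hgB.le_one e
        have h5 := hdee e; have h6 := hgB'e e
        rcases hbet e with ⟨hb1, hb2⟩ | ⟨hb1, hb2⟩ <;> omega
      · intro e hne
        by_cases hB : gB e = 0
        · have hgAne : gA e ≠ 0 := by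
            have h6 := hgB'e e
            have h5 := hdee e
            by_cases hpe : p e = 0
            · intro _; apply hne; omega
            · have := hpd0 e hpe; omega
          exact hgA.supp e hgAne
        · exact hgB.supp e hB
      · intro u hu1 hu2
        rw [hgB'def, dv_add, hgB.cons u hu1 hu2, hp3 u hu1 hu2]
        ring
    have hvA' : dv gA' nS ≤ (k : ℤ) := by
      rw [hgA'def, dv_sub, hvA1, hp1]; omega
    have hvB' : dv gB' nS ≤ (k : ℤ) := by
      rw [hgB'def, dv_add, hp1]; omega
    have e1 : (covered gA').card ≤ Delta P k := flow_le_Delta hgA' hvA'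
    have e2 : (covered gB').card ≤ Delta P k := flow_le_Delta hgB' hvB'
    have hsum : ((covered gA').card : ℤ) + ((covered gB').card : ℤ)
        = ((covered gA).card : ℤ) + ((covered gB).card : ℤ) := by
      rw [card_covered hgA', card_covered hgB', card_covered hgA, card_covered hgB]
      rw [← Finset.sum_add_distrib, ← Finset.sum_add_distrib]
      apply Finset.sum_congr rfl
      intro x _
      rw [hgA'e, hgB'e]
      ring
    omega

lemma tele_sum (f : ℕ → ℕ) (hf : Monotone f) (h0 : f 0 = 0) :
    ∀ N, (∑ j ∈ Finset.Icc 1 N, (f j - f (j - 1))) = f N := by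
  intro N
  induction N with
  | zero => simp [h0]
  | succ n ih =>
    rw [Finset.sum_Icc_succ_top (by omega : 1 ≤ n + 1), ih]
    have h1 : f n ≤ f (n + 1) := hf (by omega)
    simp only [Nat.add_sub_cancel]
    omega

end GKaux

/-- Greene–Kleitman concavity: the sequence `λ_j := Δ_j(P) − Δ_{j−1}(P)` is weakly
decreasing and nonnegative, and `(λ₁, λ₂, …)` is a partition of `|P|`. -/
theorem stmt_17 (P : Type*) [PartialOrder P] [Fintype P] [DecidableEq P] :
    Monotone (Delta P) ∧
    (∀ j : ℕ, 1 ≤ j → Delta P (j + 1) - Delta P j ≤ Delta P j - Delta P (j - 1)) ∧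
    (∑ j ∈ Finset.Icc 1 (Fintype.card P), (Delta P j - Delta P (j - 1))) =
      Fintype.card P := by
  refine ⟨GKaux.Delta_mono P, ?_, ?_⟩
  · intro j hj
    have hcon := GKaux.Delta_concave (P := P) j hj
    have m1 : Delta P (j - 1) ≤ Delta P j := GKaux.Delta_mono P (by omega)
    have m2 : Delta P j ≤ Delta P (j + 1) := GKaux.Delta_mono P (by omega)
    omega
  · rw [GKaux.tele_sum (Delta P) (GKaux.Delta_mono P) (GKaux.Delta_zero P)]
    exact GKaux.Delta_card_eq P
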